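/- The counterflow effectiveness ε(NTU, C*) = (1 - exp(-NTU(1 - C*)))/(1 - C* exp(-NTU(1 - C*))) is strictly decreasing in C* on (0,1) for any fixed NTU > 0. -/
import Mathlib

/-- Slope of `exp` from `0` is strictly increasing: for `0 < a < b`,
`b * (exp a - 1) < a * (exp b - 1)`. -/
lemma exp_slope_lt {a b : ℝ} (ha : 0 < a) (hab : a < b) :
    b * (Real.exp a - 1) < a * (Real.exp b - 1) := by
  have h := strictConvexOn_exp.secant_strict_mono (a := 0) (x := a) (y := b)
    (Set.mem_univ 0) (Set.mem_univ a) (Set.mem_univ b) ha.ne' (ha.trans hab).ne' hab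
  simp only [Real.exp_zero, sub_zero] at h
  rw [div_lt_div_iff₀ ha (ha.trans hab)] at h
  nlinarith [h]

theorem counterflow_effectiveness_strictAnti_in_Cstar
    (NTU : ℝ) (hN : 0 < NTU) :
    StrictAntiOn
      (fun Cstar : ℝ =>
        (1 - Real.exp (-NTU * (1 - Cstar))) /
          (1 - Cstar * Real.exp (-NTU * (1 - Cstar))))
      (Set.Ioo (0 : ℝ) 1) := by
  intro x hx y hy hxy
  obtain ⟨hx0, hx1⟩ := hx
  obtain ⟨hy0, hy1⟩ := hy
  set u : ℝ := Real.exp (-NTU * (1 - x)) with hu_def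
  set v : ℝ := Real.exp (-NTU * (1 - y)) with hv_def
  have hu0 : 0 < u := Real.exp_pos _
  have hv0 : 0 < v := Real.exp_pos _
  have hu1 : u < 1 := by
    rw [hu_def, Real.exp_lt_one_iff]
    nlinarith
  have hv1 : v < 1 := by
    rw [hv_def, Real.exp_lt_one_iff]
    nlinarith
  have hdx : 0 < 1 - x * u := by nlinarith
  have hdy : 0 < 1 - y * v := by nlinarith
  simp only
  rw [div_lt_div_iff₀ hdy hdx]
  -- key inequality from convexity of exp
  have ha : 0 < NTU * (1 - y) := by nlinarith
  have hab : NTU * (1 - y) < NTU * (1 - x) := by nlinarith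
  have hkey := exp_slope_lt ha hab
  have e1 : Real.exp (NTU * (1 - x)) * u = 1 := by
    rw [hu_def, ← Real.exp_add]
    norm_num
  have e2 : Real.exp (NTU * (1 - y)) * v = 1 := by
    rw [hv_def, ← Real.exp_add]
    norm_num
  -- multiply hkey by u * v > 0
  have hkey2 : NTU * (1 - x) * (u * (1 - v)) < NTU * (1 - y) * (v * (1 - u)) := by
    have h := mul_lt_mul_of_pos_right hkey (mul_pos hu0 hv0)
    have l1 : NTU * (1 - x) * (Real.exp (NTU * (1 - y)) - 1) * (u * v)
        = NTU * (1 - x) * (u * (1 - v)) := by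
      linear_combination (NTU * (1 - x) * u) * e2
    have l2 : NTU * (1 - y) * (Real.exp (NTU * (1 - x)) - 1) * (u * v)
        = NTU * (1 - y) * (v * (1 - u)) := by
      linear_combination (NTU * (1 - y) * v) * e1
    rw [l1, l2] at h
    exact h
  nlinarith [hkey2, hN, mul_pos hu0 hv0]
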